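/- For a simple random walk on a finite connected graph G with absorbing vertex a, and an edge e = {x,z}, the expected number of traversals of e starting from any vertex u before absorption equals p_{xz}·S_x(u) + p_{zx}·S_z(u), where S_v(u) is the expected number of visits to v, and consequently the expected number of traversals of e is at most 2·d_a(e) + 1, where d_a(e) = min(d(x,a), d(z,a)). -/

import Mathlib

set_option linter.unusedSectionVars false

/-- `IsVisits G a x S` : `S v` is the expected number of visits to `x` before absorption
at `a` for the simple random walk started at `v` (characterized by its linear system). -/
def IsVisits {V : Type*} [Fintype V] [DecidableEq V] (G : SimpleGraph V)
    [DecidableRel G.Adj] (a x : V) (S : V → ℝ) : Prop :=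
  S a = 0 ∧ ∀ v, v ≠ a →
    (G.degree v : ℝ) * S v =
      (if v = x then (G.degree v : ℝ) else 0) + ∑ u ∈ G.neighborFinset v, S u

/-- `IsEdgeVisits G a x z S` : `S v` is the expected number of traversals (in either
direction) of the edge `{x, z}` before absorption at `a`, for the simple random walk
started at `v` (characterized by its linear system: a traversal occurs exactly when the
walk is at `x` or at `z` and moves along the edge). -/
def IsEdgeVisits {V : Type*} [Fintype V] [DecidableEq V] (G : SimpleGraph V)
    [DecidableRel G.Adj] (a x z : V) (S : V → ℝ) : Prop :=
  S a = 0 ∧ ∀ v, v ≠ a →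
    (G.degree v : ℝ) * S v =
      (if v = x ∨ v = z then 1 else 0) + ∑ u ∈ G.neighborFinset v, S u

section Helpers


open Finset

variable {V : Type*} [Fintype V] [DecidableEq V] (G : SimpleGraph V) [DecidableRel G.Adj]

private lemma rw_step {f : V → ℝ} {M : ℝ} (hM : ∀ u, f u ≤ M) {v : V}
    (hv : (G.degree v : ℝ) * f v = ∑ u ∈ G.neighborFinset v, f u) (hfv : f v = M)
    {u : V} (hu : u ∈ G.neighborFinset v) : f u = M := by
  have h0 : ∑ w ∈ G.neighborFinset v, (M - f w) = 0 := by
    rw [Finset.sum_sub_distrib, Finset.sum_const, ← hv, hfv, nsmul_eq_mul,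
      SimpleGraph.card_neighborFinset_eq_degree]
    ring
  have := (Finset.sum_eq_zero_iff_of_nonneg
    (fun w _ => sub_nonneg.2 (hM w))).1 h0 u hu
  linarith

private lemma rw_reach {f : V → ℝ} {M : ℝ} (hM : ∀ u, f u ≤ M) {B : Set V}
    (hB : ∀ v, v ∉ B → (G.degree v : ℝ) * f v = ∑ u ∈ G.neighborFinset v, f u) :
    ∀ {v b : V}, G.Walk v b → b ∈ B → f v = M → ∃ c ∈ B, f c = M := by
  intro v b w
  induction w with
  | nil => exact fun hb hv => ⟨_, hb, hv⟩
  | @cons p q r h w ih =>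
    intro hb hv
    by_cases hpB : p ∈ B
    · exact ⟨p, hpB, hv⟩
    · exact ih hb (rw_step G hM (hB p hpB) hv ((G.mem_neighborFinset p q).2 h))

private lemma harmonic_le_zero (hconn : G.Connected) {f : V → ℝ} {a : V} (ha : f a = 0)
    (hf : ∀ v, v ≠ a → (G.degree v : ℝ) * f v = ∑ u ∈ G.neighborFinset v, f u) :
    ∀ u, f u ≤ 0 := by
  have : Nonempty V := ⟨a⟩
  obtain ⟨v0, hv0⟩ := Finite.exists_max f
  intro u
  obtain ⟨c, hc, hcM⟩ := rw_reach G hv0 (B := {a})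
    (fun v hv => hf v (by simpa using hv)) ((hconn v0 a).some) rfl rfl
  have hc' : c = a := hc
  have : f v0 = 0 := by rw [← hcM, hc', ha]
  exact (hv0 u).trans this.le

private lemma harmonic_eq_zero (hconn : G.Connected) {f : V → ℝ} {a : V} (ha : f a = 0)
    (hf : ∀ v, v ≠ a → (G.degree v : ℝ) * f v = ∑ u ∈ G.neighborFinset v, f u) :
    ∀ u, f u = 0 := by
  intro u
  have h1 := harmonic_le_zero G hconn ha hf u
  have h2 := harmonic_le_zero G hconn (f := fun v => -f v) (by simpa using ha)
    (fun v hv => by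
      simp only [Finset.sum_neg_distrib, mul_neg, neg_inj]
      exact hf v hv) u
  linarith


private lemma le_max_source (hconn : G.Connected) {f : V → ℝ} {a x : V} (ha : f a = 0)
    (hf : ∀ v, v ≠ a → v ≠ x → (G.degree v : ℝ) * f v = ∑ u ∈ G.neighborFinset v, f u) :
    ∀ u, f u ≤ max (f x) 0 := by
  have : Nonempty V := ⟨a⟩
  obtain ⟨v0, hv0⟩ := Finite.exists_max f
  intro u
  obtain ⟨c, hc, hcM⟩ := rw_reach G hv0 (B := {a, x})
    (fun v hv => hf v (fun h => hv (by simp [h])) (fun h => hv (by simp [h])))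
    ((hconn v0 a).some) (by simp) rfl
  rcases hc with hc | hc
  · have : f v0 = 0 := by rw [← hcM, hc, ha]
    exact le_max_of_le_right ((hv0 u).trans this.le)
  · have : f v0 = f x := by rw [← hcM, hc]
    exact le_max_of_le_left ((hv0 u).trans this.le)

private lemma getVert_injOn' : ∀ {u v : V} (p : G.Walk u v), p.IsPath →
    ∀ i, i ≤ p.length → ∀ j, j ≤ p.length → p.getVert i = p.getVert j → i = j := by
  intro u v p
  induction p with
  | nil => intro _ i hi j hj _; simp at hi hj; omega
  | @cons u w v h q ih =>
    intro hp i hi j hj hij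
    rw [SimpleGraph.Walk.cons_isPath_iff] at hp
    match i, j with
    | 0, 0 => rfl
    | 0, j+1 =>
      exfalso; apply hp.2
      rw [SimpleGraph.Walk.mem_support_iff_exists_getVert]
      refine ⟨j, ?_, by simpa using hj⟩
      simpa [SimpleGraph.Walk.getVert_cons_succ, SimpleGraph.Walk.getVert_zero] using hij.symm
    | i+1, 0 =>
      exfalso; apply hp.2
      rw [SimpleGraph.Walk.mem_support_iff_exists_getVert]
      refine ⟨i, ?_, by simpa using hi⟩
      simpa [SimpleGraph.Walk.getVert_cons_succ, SimpleGraph.Walk.getVert_zero] using hij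
    | i+1, j+1 =>
      have := ih hp.1 i (by simpa using hi) j (by simpa using hj)
        (by simpa [SimpleGraph.Walk.getVert_cons_succ] using hij)
      omega

private lemma nbr_sum_eq (g : V → V → ℝ) (v : V) :
    ∑ u ∈ G.neighborFinset v, g v u = ∑ u, if G.Adj v u then g v u else 0 := by
  rw [← Finset.sum_filter]
  congr 1
  ext u
  simp [SimpleGraph.mem_neighborFinset]


private lemma double_sum_swap (g : V → V → ℝ) :
    ∑ v, ∑ u ∈ G.neighborFinset v, g v u = ∑ v, ∑ u ∈ G.neighborFinset v, g u v := by
  rw [show (∑ v, ∑ u ∈ G.neighborFinset v, g u v)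
      = ∑ v, ∑ u, if G.Adj v u then g u v else 0 from
    Finset.sum_congr rfl fun v _ => nbr_sum_eq G (fun a b => g b a) v]
  rw [show (∑ v, ∑ u ∈ G.neighborFinset v, g v u)
      = ∑ v, ∑ u, if G.Adj v u then g v u else 0 from
    Finset.sum_congr rfl fun v _ => nbr_sum_eq G g v]
  rw [Finset.sum_comm]
  exact Finset.sum_congr rfl fun x _ => Finset.sum_congr rfl fun y _ =>
    if_congr (G.adj_comm y x) rfl rfl

private lemma phi_le_dist (hconn : G.Connected) {φ : V → ℝ} {a x : V}
    (hφa : φ a = 0)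
    (hφ : ∀ v, v ≠ a → (G.degree v : ℝ) * φ v
      = (if v = x then 1 else 0) + ∑ u ∈ G.neighborFinset v, φ u) (u : V) :
    φ u ≤ (G.dist x a : ℝ) := by
  by_cases hxa : x = a
  · subst hxa
    have h0 := harmonic_le_zero G hconn hφa (fun v hv => by
      have h := hφ v hv; rwa [if_neg hv, zero_add] at h) u
    simpa [SimpleGraph.dist_self] using h0
  · -- divergence formula
    have hdiv : ∀ v, v ≠ a →
        ∑ w ∈ G.neighborFinset v, (φ v - φ w) = (if v = x then 1 else 0) := by
      intro v hv
      rw [Finset.sum_sub_distrib, Finset.sum_const, nsmul_eq_mul,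
        SimpleGraph.card_neighborFinset_eq_degree, hφ v hv]
      ring
    -- energy identity
    have hE : ∑ v, ∑ w ∈ G.neighborFinset v, (φ v - φ w) * φ v = φ x := by
      have hterm : ∀ v, ∑ w ∈ G.neighborFinset v, (φ v - φ w) * φ v
          = if v = x then φ v else 0 := by
        intro v
        by_cases hv : v = a
        · subst hv
          rw [if_neg (Ne.symm hxa)]
          simp [hφa]
        · rw [← Finset.sum_mul, hdiv v hv]
          split_ifs <;> ring
      rw [Finset.sum_congr rfl fun v _ => hterm v]
      simp
    have hsym : ∑ v, ∑ w ∈ G.neighborFinset v, (φ v - φ w) ^ 2 = 2 * φ x := by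
      have hB : ∑ v, ∑ w ∈ G.neighborFinset v, (φ v - φ w) * φ w = - φ x := by
        rw [double_sum_swap G (fun v w => (φ v - φ w) * φ w)]
        rw [show (∑ v, ∑ w ∈ G.neighborFinset v, (φ w - φ v) * φ v)
            = ∑ v, ∑ w ∈ G.neighborFinset v, -((φ v - φ w) * φ v) from
          Finset.sum_congr rfl fun v _ => Finset.sum_congr rfl fun w _ => by ring]
        simp only [Finset.sum_neg_distrib, hE]
      calc ∑ v, ∑ w ∈ G.neighborFinset v, (φ v - φ w) ^ 2
          = ∑ v, ∑ w ∈ G.neighborFinset v,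
            ((φ v - φ w) * φ v - (φ v - φ w) * φ w) :=
        Finset.sum_congr rfl fun v _ => Finset.sum_congr rfl fun w _ => by ring
        _ = (∑ v, ∑ w ∈ G.neighborFinset v, (φ v - φ w) * φ v)
            - ∑ v, ∑ w ∈ G.neighborFinset v, (φ v - φ w) * φ w := by
          simp [Finset.sum_sub_distrib]
        _ = 2 * φ x := by rw [hE, hB]; ring
    -- geodesic path
    obtain ⟨w0, hw0⟩ := hconn.exists_walk_length_eq_dist x a
    set p := w0.bypass with hpdef
    have hp : p.IsPath := w0.bypass_isPath
    have hlen : p.length = G.dist x a :=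
      le_antisymm (hw0 ▸ w0.length_bypass_le) (G.dist_le p)
    set d := G.dist x a with hd
    have hinj := getVert_injOn' G p hp
    set D : ℕ → ℝ := fun k => φ (p.getVert k) - φ (p.getVert (k + 1)) with hD
    have htel : ∑ k ∈ Finset.range d, D k = φ x := by
      rw [hD]
      rw [Finset.sum_range_sub' (fun k => φ (p.getVert k)) d]
      rw [SimpleGraph.Walk.getVert_zero, ← hlen, SimpleGraph.Walk.getVert_length, hφa]
      ring
    -- sum of squared drops bounded by energy
    have hsub : ∑ k ∈ Finset.range d, (D k) ^ 2 ≤ φ x := by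
      classical
      set P : Finset (V × V) := Finset.univ.filter (fun q => G.Adj q.1 q.2) with hP
      have hPsum : ∑ q ∈ P, (φ q.1 - φ q.2) ^ 2 = 2 * φ x := by
        rw [hP, Finset.sum_filter]
        rw [← hsym, Fintype.sum_prod_type]
        exact Finset.sum_congr rfl fun v _ => (nbr_sum_eq G (fun v w => (φ v - φ w) ^ 2) v).symm
      set S1 : Finset (V × V) :=
        (Finset.range d).image (fun k => (p.getVert k, p.getVert (k + 1))) with hS1
      set S2 : Finset (V × V) :=
        (Finset.range d).image (fun k => (p.getVert (k + 1), p.getVert k)) with hS2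
      have hk1 : ∀ k ∈ Finset.range d, k ≤ p.length := fun k hk => by
        rw [hlen]; exact (Finset.mem_range.1 hk).le
      have hk2 : ∀ k ∈ Finset.range d, k + 1 ≤ p.length := fun k hk => by
        rw [hlen]; exact Finset.mem_range.1 hk
      have hS1sum : ∑ q ∈ S1, (φ q.1 - φ q.2) ^ 2 = ∑ k ∈ Finset.range d, (D k) ^ 2 := by
        rw [hS1, Finset.sum_image]
        intro i hi j hj hij
        exact hinj i (hk1 i hi) j (hk1 j hj) (congrArg Prod.fst hij)
      have hS2sum : ∑ q ∈ S2, (φ q.1 - φ q.2) ^ 2 = ∑ k ∈ Finset.range d, (D k) ^ 2 := by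
        rw [hS2, Finset.sum_image]
        · exact Finset.sum_congr rfl fun k _ => by rw [hD]; ring
        · intro i hi j hj hij
          have := hinj (i + 1) (hk2 i hi) (j + 1) (hk2 j hj) (congrArg Prod.fst hij)
          omega
      have hdisj : Disjoint S1 S2 := by
        rw [Finset.disjoint_left]
        rintro q hq1 hq2
        rw [hS1, Finset.mem_image] at hq1
        rw [hS2, Finset.mem_image] at hq2
        obtain ⟨i, hi, rfl⟩ := hq1
        obtain ⟨j, hj, hji⟩ := hq2
        have e1 : p.getVert (j + 1) = p.getVert i := congrArg Prod.fst hji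
        have e2 : p.getVert j = p.getVert (i + 1) := congrArg Prod.snd hji
        have h1 := hinj (j + 1) (hk2 j hj) i (hk1 i hi) e1
        have h2 := hinj j (hk1 j hj) (i + 1) (hk2 i hi) e2
        omega
      have hsubP : S1 ∪ S2 ⊆ P := by
        intro q hq
        rw [hP, Finset.mem_filter]
        refine ⟨Finset.mem_univ q, ?_⟩
        rcases Finset.mem_union.1 hq with hq | hq
        · rw [hS1, Finset.mem_image] at hq
          obtain ⟨k, hk, rfl⟩ := hq
          exact p.adj_getVert_succ (hlen ▸ Finset.mem_range.1 hk)
        · rw [hS2, Finset.mem_image] at hq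
          obtain ⟨k, hk, rfl⟩ := hq
          exact (p.adj_getVert_succ (hlen ▸ Finset.mem_range.1 hk)).symm
      have hle : ∑ q ∈ S1 ∪ S2, (φ q.1 - φ q.2) ^ 2 ≤ ∑ q ∈ P, (φ q.1 - φ q.2) ^ 2 :=
        Finset.sum_le_sum_of_subset_of_nonneg hsubP (fun q _ _ => sq_nonneg _)
      rw [Finset.sum_union hdisj, hS1sum, hS2sum, hPsum] at hle
      linarith
    -- Cauchy–Schwarz
    have hCS : (φ x) ^ 2 ≤ (d : ℝ) * ∑ k ∈ Finset.range d, (D k) ^ 2 := by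
      have := Finset.sum_mul_sq_le_sq_mul_sq (Finset.range d) (fun _ => 1) D
      simp only [one_mul, one_pow, Finset.sum_const, Finset.card_range, nsmul_eq_mul,
        mul_one] at this
      rw [htel] at this
      exact this
    have hd0 : (0 : ℝ) ≤ (d : ℝ) := Nat.cast_nonneg d
    have hφx0 : 0 ≤ φ x := by nlinarith
    have hφxd : φ x ≤ (d : ℝ) := by nlinarith
    -- maximum principle
    have hmax := le_max_source G hconn hφa (fun v hva hvx => by
      have h := hφ v hva; rwa [if_neg hvx, zero_add] at h) u
    calc φ u ≤ max (φ x) 0 := hmax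
      _ = φ x := max_eq_left hφx0
      _ ≤ (d : ℝ) := hφxd

end Helpers

/-- For a simple random walk on a finite connected graph `G` with absorbing vertex `a`
and an edge `e = {x,z}`, the expected number of traversals of `e` from any start `u`
equals `p_{xz}·S_x(u) + p_{zx}·S_z(u)`, and consequently it is at most `2·d_a(e) + 1`
where `d_a(e) = min(d(x,a), d(z,a))`. -/
theorem edge_traversals_identity_and_bound {V : Type*} [Fintype V] [DecidableEq V]
    (G : SimpleGraph V) [DecidableRel G.Adj] (hconn : G.Connected)
    (a x z : V) (hadj : G.Adj x z)
    (Sx Sz Se : V → ℝ)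
    (hSx : IsVisits G a x Sx) (hSz : IsVisits G a z Sz)
    (hSe : IsEdgeVisits G a x z Se) (u : V) :
    Se u = (1 / (G.degree x : ℝ)) * Sx u + (1 / (G.degree z : ℝ)) * Sz u ∧
      Se u ≤ 2 * (min (G.dist x a) (G.dist z a) : ℝ) + 1 := by
  obtain ⟨hSxa, hSx2⟩ := hSx
  obtain ⟨hSza, hSz2⟩ := hSz
  obtain ⟨hSea, hSe2⟩ := hSe
  have hdx : (0 : ℝ) < (G.degree x : ℝ) := by
    exact_mod_cast (G.degree_pos_iff_exists_adj x).2 ⟨z, hadj⟩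
  have hdz : (0 : ℝ) < (G.degree z : ℝ) := by
    exact_mod_cast (G.degree_pos_iff_exists_adj z).2 ⟨x, hadj.symm⟩
  obtain ⟨φx, hφxdef⟩ : ∃ f : V → ℝ, f = fun v => Sx v / (G.degree x : ℝ) := ⟨_, rfl⟩
  obtain ⟨φz, hφzdef⟩ : ∃ f : V → ℝ, f = fun v => Sz v / (G.degree z : ℝ) := ⟨_, rfl⟩
  have hφxa : φx a = 0 := by simp [hφxdef, hSxa]
  have hφza : φz a = 0 := by simp [hφzdef, hSza]
  have hφx : ∀ v, v ≠ a → (G.degree v : ℝ) * φx v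
      = (if v = x then 1 else 0) + ∑ w ∈ G.neighborFinset v, φx w := by
    intro v hv
    rw [hφxdef]
    simp only
    rw [mul_div_assoc', hSx2 v hv, add_div, Finset.sum_div]
    congr 1
    split_ifs with h
    · subst h; exact div_self (ne_of_gt hdx)
    · exact zero_div _
  have hφz : ∀ v, v ≠ a → (G.degree v : ℝ) * φz v
      = (if v = z then 1 else 0) + ∑ w ∈ G.neighborFinset v, φz w := by
    intro v hv
    rw [hφzdef]
    simp only
    rw [mul_div_assoc', hSz2 v hv, add_div, Finset.sum_div]
    congr 1
    split_ifs with h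
    · subst h; exact div_self (ne_of_gt hdz)
    · exact zero_div _
  have hkey : ∀ w, Se w = φx w + φz w := by
    have hsys : ∀ v, v ≠ a → (G.degree v : ℝ) * (Se v - φx v - φz v)
        = ∑ w ∈ G.neighborFinset v, (Se w - φx w - φz w) := by
      intro v hv
      have h1 := hSe2 v hv
      have h2 := hφx v hv
      have h3 := hφz v hv
      have hind : (if v = x ∨ v = z then (1 : ℝ) else 0)
          = (if v = x then 1 else 0) + (if v = z then 1 else 0) := by
        by_cases hvx : v = x <;> by_cases hvz : v = z <;>
          simp_all [hadj.ne]
      simp only [Finset.sum_sub_distrib]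
      rw [mul_sub, mul_sub, h1, h2, h3, hind]
      ring
    have hzero := harmonic_eq_zero G hconn
      (f := fun v => Se v - φx v - φz v) (by simp [hSea, hφxa, hφza]) hsys
    intro w
    have := hzero w
    linarith
  have hid : Se u = 1 / (G.degree x : ℝ) * Sx u + 1 / (G.degree z : ℝ) * Sz u := by
    rw [hkey u, hφxdef, hφzdef]
    simp only []
    ring
  refine ⟨hid, ?_⟩
  have hbx := phi_le_dist G hconn hφxa hφx u
  have hbz := phi_le_dist G hconn hφza hφz u
  have hxz1 : G.dist x z ≤ 1 := by
    simpa using G.dist_le (SimpleGraph.Walk.cons hadj SimpleGraph.Walk.nil)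
  have hzx1 : G.dist z x ≤ 1 := by
    simpa using G.dist_le (SimpleGraph.Walk.cons hadj.symm SimpleGraph.Walk.nil)
  have ht1 : G.dist x a ≤ G.dist z a + 1 := by
    have h := hconn.dist_triangle (u := x) (v := z) (w := a)
    omega
  have ht2 : G.dist z a ≤ G.dist x a + 1 := by
    have h := hconn.dist_triangle (u := z) (v := x) (w := a)
    omega
  have hnat : G.dist x a + G.dist z a ≤ 2 * min (G.dist x a) (G.dist z a) + 1 := by
    omega
  have hcast : (G.dist x a : ℝ) + (G.dist z a : ℝ)
      ≤ 2 * (min (G.dist x a) (G.dist z a) : ℝ) + 1 := by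
    exact_mod_cast hnat
  rw [hkey u]
  linarith
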